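/- Let A and B be self-adjoint operators on a Hilbert space with A boundedly invertible and ‖A^{-1/2} B A^{-1/2}‖ ≤ q < 1 (where A > 0). Then A + B is boundedly invertible and ‖(A + B)^{-1}‖ ≤ ‖A^{-1}‖ / (1 - q). -/

import Mathlib

/-- If `A` is a positive self-adjoint boundedly invertible operator, `B` is self-adjoint,
`R = A^{-1/2}` (i.e. `R` is self-adjoint, positive, and `R * R = A⁻¹`), and
`‖R B R‖ ≤ q < 1`, then `A + B` is boundedly invertible (via a Neumann series) and
`‖(A + B)⁻¹‖ ≤ ‖A⁻¹‖ / (1 - q)`. -/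
theorem neumann_series_inverse_bound
    {𝓗 : Type*} [NormedAddCommGroup 𝓗] [InnerProductSpace ℂ 𝓗] [CompleteSpace 𝓗]
    (A B R Ainv : 𝓗 →L[ℂ] 𝓗) (q : ℝ)
    (hA : IsSelfAdjoint A) (hB : IsSelfAdjoint B)
    (hApos : ∀ x : 𝓗, 0 ≤ (inner ℂ x (A x) : ℂ).re)
    (hAinv₁ : A * Ainv = 1) (hAinv₂ : Ainv * A = 1)
    (hR : IsSelfAdjoint R) (hRpos : ∀ x : 𝓗, 0 ≤ (inner ℂ x (R x) : ℂ).re)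
    (hRR : R * R = Ainv)
    (hq : ‖R * B * R‖ ≤ q) (hq1 : q < 1) :
    ∃ C : 𝓗 →L[ℂ] 𝓗, (A + B) * C = 1 ∧ C * (A + B) = 1 ∧
      ‖C‖ ≤ ‖Ainv‖ / (1 - q) := by
  set T : 𝓗 →L[ℂ] 𝓗 := R * B * R with hT
  have hq0 : (0 : ℝ) ≤ q := le_trans (norm_nonneg _) hq
  have hTn : ‖-T‖ < 1 := by rw [norm_neg]; exact lt_of_le_of_lt hq hq1
  -- inverse of R
  have hER : (A * R) * R = 1 := by rw [mul_assoc, hRR, hAinv₁]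
  have hRE : R * (R * A) = 1 := by rw [← mul_assoc, hRR, hAinv₂]
  have hE : A * R = R * A := by
    calc A * R = (A * R) * (R * (R * A)) := by rw [hRE, mul_one]
    _ = ((A * R) * R) * (R * A) := by simp only [mul_assoc]
    _ = R * A := by rw [hER, one_mul]
  have hRAR : R * A * R = 1 := by rw [← hE, mul_assoc, ← mul_assoc, hER]
  -- key identity
  have hkey : R * (A + B) * R = 1 + T := by
    rw [mul_add, add_mul, hRAR, hT]
  have hAB0 : (A * R) * (R * (A + B) * R) * (R * A) = A + B := by
    calc (A * R) * (R * (A + B) * R) * (R * A)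
        = ((A * R) * R) * ((A + B) * (R * (R * A))) := by simp only [mul_assoc]
      _ = A + B := by rw [hER, hRE, one_mul, mul_one]
  have hAB : A + B = (A * R) * (1 + T) * (R * A) := by rw [← hAB0, hkey]
  -- geometric series inverse of 1 + T
  set S : 𝓗 →L[ℂ] 𝓗 := ∑' n : ℕ, (-T) ^ n with hS
  have hS1 : (1 + T) * S = 1 := by
    have := mul_neg_geom_series (-T) hTn
    simpa [sub_neg_eq_add] using this
  have hS2 : S * (1 + T) = 1 := by
    have := geom_series_mul_neg (-T) hTn
    simpa [sub_neg_eq_add] using this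
  refine ⟨R * S * R, ?_, ?_, ?_⟩
  · calc (A + B) * (R * S * R)
        = (A * R) * ((1 + T) * (((R * A) * R) * (S * R))) := by
          rw [hAB]; simp only [mul_assoc]
      _ = (A * R) * (((1 + T) * S) * R) := by
          rw [← hE, hER, one_mul]; simp only [mul_assoc]
      _ = 1 := by rw [hS1, one_mul, hER]
  · calc (R * S * R) * (A + B)
        = R * ((S * ((R * (A * R)) * (1 + T))) * (R * A)) := by
          rw [hAB]; simp only [mul_assoc]
      _ = R * ((S * (1 + T)) * (R * A)) := by rw [hE, hRE, one_mul]
      _ = 1 := by rw [hS2, one_mul, hRE]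
  · have hRR' : ‖R‖ * ‖R‖ = ‖Ainv‖ := by
      rw [← hRR]
      have := CStarRing.norm_star_mul_self (x := R)
      rw [hR.star_eq] at this; exact this.symm
    have hSbound : ‖S‖ ≤ (1 - q)⁻¹ := by
      have h1 : ‖S‖ ≤ ‖(1 : 𝓗 →L[ℂ] 𝓗)‖ - 1 + (1 - ‖-T‖)⁻¹ :=
        tsum_geometric_le_of_norm_lt_one (-T) hTn
      have h2 : ‖(1 : 𝓗 →L[ℂ] 𝓗)‖ ≤ 1 := ContinuousLinearMap.norm_id_le
      have h3 : (1 - ‖-T‖)⁻¹ ≤ (1 - q)⁻¹ := by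
        apply inv_anti₀ (by linarith)
        rw [norm_neg]; linarith
      linarith
    calc ‖R * S * R‖ ≤ ‖R * S‖ * ‖R‖ := norm_mul_le _ _
      _ ≤ ‖R‖ * ‖S‖ * ‖R‖ := by
          have := norm_mul_le R S
          nlinarith [norm_nonneg R]
      _ = ‖Ainv‖ * ‖S‖ := by rw [← hRR']; ring
      _ ≤ ‖Ainv‖ * (1 - q)⁻¹ := mul_le_mul_of_nonneg_left hSbound (norm_nonneg _)
      _ = ‖Ainv‖ / (1 - q) := by rw [div_eq_mul_inv]
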